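/- Let A be a Büchi automaton in which every nondeterministic branching occurs only outside non-trivial SCCs (i.e., for any transitions q →ᵃ p and q →ᵃ r with p ≠ r, neither p nor r lies in the same SCC as q). Then for every infinite word w, the number of distinct runs of A on w is finite; in fact it is bounded by a constant depending only on A (e.g., |Q| · (number of SccIndices) suffices as a bound on the number of runs distinguishable at any point, and the run DAG of A over w has finitely many infinite branches). -/

import Mathlib

/-- A (transition-based) Büchi automaton over alphabet `A` with states `Q`:
transition relation `δ`, initial states `I`, accepting transitions `F`. -/
structure BA (Q A : Type) where
  δ : Set (Q × A × Q)
  I : Set Q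
  F : Set (Q × A × Q)

variable {Q A : Type}

/-- `ρ` is a run of `M` on the infinite word `w` (starting at `ρ 0`). -/
def BA.IsRun (M : BA Q A) (w : ℕ → A) (ρ : ℕ → Q) : Prop :=
  ∀ i, (ρ i, w i, ρ (i + 1)) ∈ M.δ

/-- The run `ρ` takes accepting transitions infinitely often. -/
def BA.InfAcc (M : BA Q A) (w : ℕ → A) (ρ : ℕ → Q) : Prop :=
  ∀ N, ∃ i ≥ N, (ρ i, w i, ρ (i + 1)) ∈ M.F

/-- The ω-language of the Büchi automaton `M`. -/
def BA.Lang (M : BA Q A) : Set (ℕ → A) :=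
  {w | ∃ ρ : ℕ → Q, ρ 0 ∈ M.I ∧ M.IsRun w ρ ∧ M.InfAcc w ρ}

/-- One-step successor relation of `M`. -/
def BA.Step (M : BA Q A) (q r : Q) : Prop := ∃ a, (q, a, r) ∈ M.δ

/-- Reachability along transitions of `M`. -/
def BA.Reach (M : BA Q A) : Q → Q → Prop := Relation.ReflTransGen M.Step

/-- Mutual reachability. -/
def BA.SameSCC (M : BA Q A) (q r : Q) : Prop := M.Reach q r ∧ M.Reach r q

/-- `C` is a strongly connected component of `M` (an equivalence class of
mutual reachability). -/
def BA.IsSCC (M : BA Q A) (C : Set Q) : Prop := ∃ q : Q, C = {r | M.SameSCC q r}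

/-- `C` is accepting: it contains an accepting transition with both endpoints in `C`. -/
def BA.AccSCC (M : BA Q A) (C : Set Q) : Prop :=
  ∃ t : Q × A × Q, t ∈ M.F ∧ t ∈ M.δ ∧ t.1 ∈ C ∧ t.2.2 ∈ C

/-- A cycle within `C`: a nonempty closed finite path of transitions all of whose
states lie in `C`. -/
def BA.IsCycleIn (M : BA Q A) (C : Set Q) (n : ℕ) (σ : ℕ → Q) (a : ℕ → A) : Prop :=
  0 < n ∧ σ 0 = σ n ∧ ∀ j < n, σ j ∈ C ∧ (σ j, a j, σ (j + 1)) ∈ M.δ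

/-- `C` is inherently weak accepting: every cycle within `C` contains an accepting
transition. -/
def BA.IWA (M : BA Q A) (C : Set Q) : Prop :=
  ∀ n σ a, M.IsCycleIn C n σ a → ∃ j < n, (σ j, a j, σ (j + 1)) ∈ M.F

/-- `C` is inherently weak rejecting: no cycle within `C` contains an accepting
transition. -/
def BA.IWR (M : BA Q A) (C : Set Q) : Prop :=
  ∀ n σ a, M.IsCycleIn C n σ a → ∀ j < n, (σ j, a j, σ (j + 1)) ∉ M.F

/-- Successors of a set of states over a letter. -/
def BA.post (M : BA Q A) (S : Set Q) (a : A) : Set Q := {r | ∃ q ∈ S, (q, a, r) ∈ M.δ}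

/-- The subset-construction run `S₀ = I`, `S_{i+1} = δ(S_i, w i)`. -/
def BA.subsetRun (M : BA Q A) (w : ℕ → A) : ℕ → Set Q
  | 0 => M.I
  | i + 1 => M.post (M.subsetRun w i) (w i)

/-- Rank of a state: the number of states reachable from it. -/
noncomputable def BA.rk [Fintype Q] (M : BA Q A) (q : Q) : ℕ :=
  {p | M.Reach q p}.ncard

lemma BA.rk_le_card [Fintype Q] (M : BA Q A) (q : Q) :
    M.rk q ≤ Fintype.card Q := by
  have h := Set.ncard_le_ncard (Set.subset_univ {p | M.Reach q p}) Set.finite_univ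
  simpa [BA.rk, Set.ncard_univ, Nat.card_eq_fintype_card] using h

lemma BA.reach_subset (M : BA Q A) {q p : Q} (h : M.Step q p) :
    {r | M.Reach p r} ⊆ {r | M.Reach q r} := fun _ hr =>
  Relation.ReflTransGen.head h hr

lemma BA.rk_le_step [Fintype Q] (M : BA Q A) {q p : Q} (h : M.Step q p) :
    M.rk p ≤ M.rk q :=
  Set.ncard_le_ncard (M.reach_subset h) (Set.toFinite _)

lemma BA.rk_lt_step [Fintype Q] (M : BA Q A) {q p : Q} (h : M.Step q p)
    (hn : ¬ M.Reach p q) : M.rk p < M.rk q := by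
  apply Set.ncard_lt_ncard _ (Set.toFinite _)
  exact ⟨M.reach_subset h, fun hs => hn (hs Relation.ReflTransGen.refl)⟩

/-- if every nondeterministic branching of `M` occurs only outside
non-trivial SCCs (for transitions `q →ᵃ p`, `q →ᵃ r` with `p ≠ r`, neither `p` nor `r`
lies in the same SCC as `q`), then for every infinite word the set of runs of `M` from
the initial states is finite, with a uniform bound depending only on `M`. -/
theorem finitely_many_runs [Fintype Q] [Fintype A] (M : BA Q A)
    (hbr : ∀ q a p r, (q, a, p) ∈ M.δ → (q, a, r) ∈ M.δ → p ≠ r →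
      ¬ M.SameSCC q p ∧ ¬ M.SameSCC q r) :
    ∃ n : ℕ, ∀ w : ℕ → A,
      {ρ : ℕ → Q | ρ 0 ∈ M.I ∧ M.IsRun w ρ}.Finite ∧
      {ρ : ℕ → Q | ρ 0 ∈ M.I ∧ M.IsRun w ρ}.ncard ≤ n := by
  classical
  set N := Fintype.card Q with hN
  refine ⟨Fintype.card (Fin (N + 1) → Q), fun w => ?_⟩
  set S := {ρ : ℕ → Q | ρ 0 ∈ M.I ∧ M.IsRun w ρ} with hS
  -- rank is antitone along a run
  have hanti : ∀ ρ : ℕ → Q, M.IsRun w ρ → ∀ i j, i ≤ j → M.rk (ρ j) ≤ M.rk (ρ i) := by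
    intro ρ hρ i j hij
    induction j, hij using Nat.le_induction with
    | base => exact le_refl _
    | succ j hij ih => exact le_trans (M.rk_le_step ⟨w j, hρ j⟩) ih
  -- at a divergence point, both ranks strictly drop
  have hdiv : ∀ ρ ρ' : ℕ → Q, M.IsRun w ρ → M.IsRun w ρ' → ∀ i, ρ i = ρ' i →
      ρ (i + 1) ≠ ρ' (i + 1) →
      M.rk (ρ (i + 1)) < M.rk (ρ i) ∧ M.rk (ρ' (i + 1)) < M.rk (ρ i) := by
    intro ρ ρ' hρ hρ' i hi hne
    have h1 := hρ i
    have h2 := hρ' i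
    rw [← hi] at h2
    obtain ⟨hs1, hs2⟩ := hbr (ρ i) (w i) (ρ (i + 1)) (ρ' (i + 1)) h1 h2 hne
    constructor
    · exact M.rk_lt_step ⟨w i, h1⟩
        (fun hr => hs1 ⟨Relation.ReflTransGen.single ⟨_, h1⟩, hr⟩)
    · exact M.rk_lt_step ⟨w i, h2⟩
        (fun hr => hs2 ⟨Relation.ReflTransGen.single ⟨_, h2⟩, hr⟩)
  -- the encoding map
  set F : (ℕ → Q) → (Fin (N + 1) → Q) := fun ρ k =>
    if h : ∃ j, M.rk (ρ j) ≤ N - (k : ℕ) then ρ (Nat.find h) else ρ 0 with hF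
  have hinj : Set.InjOn F S := by
    intro ρ hρ ρ' hρ' hFeq
    funext i
    induction i with
    | zero =>
      have h0 : ∃ j, M.rk (ρ j) ≤ N - ((0 : Fin (N + 1)) : ℕ) :=
        ⟨0, by simpa using M.rk_le_card (ρ 0)⟩
      have h0' : ∃ j, M.rk (ρ' j) ≤ N - ((0 : Fin (N + 1)) : ℕ) :=
        ⟨0, by simpa using M.rk_le_card (ρ' 0)⟩
      have := congrFun hFeq (0 : Fin (N + 1))
      rw [hF] at this
      simp only [dif_pos h0, dif_pos h0'] at this
      have e0 : Nat.find h0 = 0 := (Nat.find_eq_zero h0).mpr (by simpa using M.rk_le_card (ρ 0))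
      have e0' : Nat.find h0' = 0 := (Nat.find_eq_zero h0').mpr (by simpa using M.rk_le_card (ρ' 0))
      rw [e0, e0'] at this
      exact this
    | succ i ih =>
      by_contra hne
      obtain ⟨hd1, hd2⟩ := hdiv ρ ρ' hρ.2 hρ'.2 i ih hne
      set m := max (M.rk (ρ (i + 1))) (M.rk (ρ' (i + 1))) with hm
      have hmlt : m < M.rk (ρ i) := max_lt hd1 hd2
      have hmN : m ≤ N := le_trans hmlt.le (M.rk_le_card _)
      set k : Fin (N + 1) := ⟨N - m, Nat.lt_succ_of_le (Nat.sub_le _ _)⟩ with hk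
      have hkval : N - (k : ℕ) = m := by simp [hk]; omega
      have hx : ∃ j, M.rk (ρ j) ≤ N - (k : ℕ) := ⟨i + 1, by rw [hkval]; exact le_max_left _ _⟩
      have hx' : ∃ j, M.rk (ρ' j) ≤ N - (k : ℕ) := ⟨i + 1, by rw [hkval]; exact le_max_right _ _⟩
      have hfind : Nat.find hx = i + 1 := by
        rw [Nat.find_eq_iff]
        refine ⟨by rw [hkval]; exact le_max_left _ _, fun j hj hle => ?_⟩
        rw [hkval] at hle
        have : M.rk (ρ i) ≤ M.rk (ρ j) := hanti ρ hρ.2 j i (Nat.lt_succ_iff.mp hj)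
        omega
      have hfind' : Nat.find hx' = i + 1 := by
        rw [Nat.find_eq_iff]
        refine ⟨by rw [hkval]; exact le_max_right _ _, fun j hj hle => ?_⟩
        rw [hkval] at hle
        have h1 : M.rk (ρ' i) ≤ M.rk (ρ' j) := hanti ρ' hρ'.2 j i (Nat.lt_succ_iff.mp hj)
        rw [← ih] at h1
        omega
      have := congrFun hFeq k
      rw [hF] at this
      simp only [dif_pos hx, dif_pos hx'] at this
      rw [hfind, hfind'] at this
      exact hne this
  have hfin : S.Finite := Set.Finite.of_finite_image (Set.toFinite _) hinj
  refine ⟨hfin, ?_⟩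
  calc S.ncard = (F '' S).ncard := (Set.ncard_image_of_injOn hinj).symm
    _ ≤ (Set.univ : Set (Fin (N + 1) → Q)).ncard :=
        Set.ncard_le_ncard (Set.subset_univ _) Set.finite_univ
    _ = Fintype.card (Fin (N + 1) → Q) := by
        rw [Set.ncard_univ, Nat.card_eq_fintype_card]
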